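/- Fix p ∈ (0,1), σ > 0 and τ > 0, and define for δ ∈ ℝ the conditional Jeffreys prior π^J(δ) = [ ∫_ℝ ((1−p) x exp(−x²/2))² / ( p σ exp(−σ²(x + δ/(στ))²/2) + (1−p) exp(−x²/2) ) dx ]^{1/2}. Then there is a constant c > 0 (independent of δ) with π^J(δ) ≥ c for all δ ∈ ℝ, and consequently ∫_ℝ π^J(δ) dδ = +∞: the conditional Jeffreys prior on the standardized mean difference δ is improper. -/

import Mathlib

open MeasureTheory

noncomputable section

/-- The conditional Jeffreys prior for the standardized mean difference `δ` in the
Mengersen–Robert reparametrization of a two-component Gaussian mixture: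
`π^J(δ) = [∫ ((1-p) x e^{-x²/2})² / (pσ e^{-σ²(x + δ/(στ))²/2} + (1-p) e^{-x²/2}) dx]^{1/2}`. -/
def condJeffreysDelta (p σ τ δ : ℝ) : ℝ :=
  Real.sqrt (∫ x : ℝ,
    ((1 - p) * x * Real.exp (-(x ^ 2) / 2)) ^ 2 /
      (p * σ * Real.exp (-(σ ^ 2 * (x + δ / (σ * τ)) ^ 2) / 2) +
        (1 - p) * Real.exp (-(x ^ 2) / 2)))

lemma integrable_sq_mul_exp_neg_mul_sq {b : ℝ} (hb : 0 < b) :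
    Integrable fun x : ℝ => x ^ 2 * Real.exp (-b * x ^ 2) := by
  have := integrable_rpow_mul_exp_neg_mul_sq hb (s := 2) (by norm_num)
  have heq : (fun x : ℝ => x ^ (2 : ℝ) * Real.exp (-b * x ^ 2)) =
      fun x : ℝ => x ^ 2 * Real.exp (-b * x ^ 2) := by
    funext x
    rw [show (2 : ℝ) = ((2 : ℕ) : ℝ) by norm_num, Real.rpow_natCast]
  rwa [heq] at this

/-- for fixed `p ∈ (0,1)`, `σ > 0`, `τ > 0`, the conditional Jeffreys
prior `π^J(δ)` is bounded below by a positive constant independent of `δ`, and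
consequently `∫_ℝ π^J(δ) dδ = +∞`: it is improper. -/
theorem condJeffreysDelta_improper (p σ τ : ℝ) (hp : p ∈ Set.Ioo (0 : ℝ) 1)
    (hσ : 0 < σ) (hτ : 0 < τ) :
    (∃ c : ℝ, 0 < c ∧ ∀ δ : ℝ, c ≤ condJeffreysDelta p σ τ δ) ∧
    (∫⁻ δ : ℝ, ENNReal.ofReal (condJeffreysDelta p σ τ δ)) = ⊤ := by
  obtain ⟨hp0, hp1⟩ := hp
  have h1p : (0 : ℝ) < 1 - p := by linarith
  set C : ℝ := p * σ + (1 - p) with hC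
  have hCpos : 0 < C := by positivity
  -- notation for the integrand
  set N : ℝ → ℝ := fun x => ((1 - p) * x * Real.exp (-(x ^ 2) / 2)) ^ 2 with hN
  set D : ℝ → ℝ → ℝ := fun δ x =>
      p * σ * Real.exp (-(σ ^ 2 * (x + δ / (σ * τ)) ^ 2) / 2) +
        (1 - p) * Real.exp (-(x ^ 2) / 2) with hD
  have hDpos : ∀ δ x, 0 < D δ x := by
    intro δ x
    have h1 : 0 < p * σ * Real.exp (-(σ ^ 2 * (x + δ / (σ * τ)) ^ 2) / 2) := by positivity
    have h2 : 0 < (1 - p) * Real.exp (-(x ^ 2) / 2) := by positivity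
    exact add_pos h1 h2
  have hDleC : ∀ δ x, D δ x ≤ C := by
    intro δ x
    have h1 : Real.exp (-(σ ^ 2 * (x + δ / (σ * τ)) ^ 2) / 2) ≤ 1 := by
      apply Real.exp_le_one_iff.mpr
      nlinarith [sq_nonneg (x + δ / (σ * τ)), sq_nonneg σ]
    have h2 : Real.exp (-(x ^ 2) / 2) ≤ 1 := by
      apply Real.exp_le_one_iff.mpr
      nlinarith [sq_nonneg x]
    have hb1 : p * σ * Real.exp (-(σ ^ 2 * (x + δ / (σ * τ)) ^ 2) / 2) ≤ p * σ := by
      nlinarith [mul_pos hp0 hσ]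
    have hb2 : (1 - p) * Real.exp (-(x ^ 2) / 2) ≤ 1 - p := by nlinarith
    simp only [hD, hC]
    linarith
  -- the lower bounding function g
  set g : ℝ → ℝ := fun x => N x / C with hg
  -- the upper bounding function B
  set B : ℝ → ℝ := fun x => (1 - p) * (x ^ 2 * Real.exp (-(1 / 2) * x ^ 2)) with hB
  have hNval : ∀ x : ℝ, N x = (1 - p) ^ 2 * (x ^ 2 * Real.exp (-1 * x ^ 2)) := by
    intro x
    simp only [hN]
    rw [mul_pow, mul_pow, ← Real.exp_nat_mul]
    ring_nf
  have hg_int : Integrable g := by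
    have : g = fun x => ((1 - p) ^ 2 / C) * (x ^ 2 * Real.exp (-1 * x ^ 2)) := by
      funext x; simp only [hg, hNval x]; ring
    rw [this]
    exact (integrable_sq_mul_exp_neg_mul_sq (by norm_num)).const_mul _
  have hB_int : Integrable B :=
    (integrable_sq_mul_exp_neg_mul_sq (by norm_num : (0:ℝ) < 1/2)).const_mul _
  -- positivity of ∫ g
  have hg_nonneg : ∀ x, 0 ≤ g x := fun x => div_nonneg (sq_nonneg _) hCpos.le
  have hg_pos : 0 < ∫ x : ℝ, g x := by
    rw [integral_pos_iff_support_of_nonneg hg_nonneg hg_int]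
    have hsub : Set.Ioi (0 : ℝ) ⊆ Function.support g := by
      intro x hx
      have hx0 : (0 : ℝ) < x := hx
      have : 0 < g x := by
        apply div_pos _ hCpos
        simp only [hN]
        positivity
      exact this.ne'
    calc (0 : ENNReal) < ⊤ := by simp
      _ = volume (Set.Ioi (0 : ℝ)) := Real.volume_Ioi.symm
      _ ≤ volume (Function.support g) := measure_mono hsub
  -- for each δ, the integrand is bounded between g and B
  have hfg : ∀ δ x, g x ≤ N x / D δ x := by
    intro δ x
    exact div_le_div_of_nonneg_left (sq_nonneg _) (hDpos δ x) (hDleC δ x)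
  have hfB : ∀ δ x, N x / D δ x ≤ B x := by
    intro δ x
    have hE : (0 : ℝ) < (1 - p) * Real.exp (-(x ^ 2) / 2) := by positivity
    have hDD : (1 - p) * Real.exp (-(x ^ 2) / 2) ≤ D δ x := by
      simp only [hD]
      have : 0 ≤ p * σ * Real.exp (-(σ ^ 2 * (x + δ / (σ * τ)) ^ 2) / 2) := by positivity
      linarith
    have h1 : N x / D δ x ≤ N x / ((1 - p) * Real.exp (-(x ^ 2) / 2)) :=
      div_le_div_of_nonneg_left (sq_nonneg _) hE hDD
    have h2 : N x / ((1 - p) * Real.exp (-(x ^ 2) / 2)) = B x := by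
      simp only [hN, hB]
      have hEne : Real.exp (-(x ^ 2) / 2) ≠ 0 := (Real.exp_pos _).ne'
      have hexp : Real.exp (-(1 / 2) * x ^ 2) = Real.exp (-(x ^ 2) / 2) := by
        congr 1; ring
      rw [hexp]
      field_simp
    rw [h2] at h1
    exact h1
  -- measurability / integrability of the integrand
  have hf_cont : ∀ δ, Continuous fun x => N x / D δ x := by
    intro δ
    have hNc : Continuous N := by
      simp only [hN]; fun_prop
    have hDc : Continuous (D δ) := by
      simp only [hD]; fun_prop
    exact hNc.div hDc fun x => (hDpos δ x).ne'
  have hf_int : ∀ δ, Integrable fun x => N x / D δ x := by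
    intro δ
    apply Integrable.mono' hB_int (hf_cont δ).aestronglyMeasurable
    filter_upwards with x
    rw [Real.norm_eq_abs, abs_of_nonneg (div_nonneg (sq_nonneg _) (hDpos δ x).le)]
    exact hfB δ x
  -- lower bound on the integral, uniform in δ
  have hmain : ∀ δ, ∫ x : ℝ, g x ≤ ∫ x : ℝ, N x / D δ x := by
    intro δ
    exact integral_mono hg_int (hf_int δ) (hfg δ)
  set c : ℝ := Real.sqrt (∫ x : ℝ, g x) with hc
  have hcpos : 0 < c := Real.sqrt_pos.mpr hg_pos
  have hlb : ∀ δ : ℝ, c ≤ condJeffreysDelta p σ τ δ := by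
    intro δ
    exact Real.sqrt_le_sqrt (hmain δ)
  refine ⟨⟨c, hcpos, hlb⟩, ?_⟩
  have hge : (∫⁻ _ : ℝ, ENNReal.ofReal c) ≤
      ∫⁻ δ : ℝ, ENNReal.ofReal (condJeffreysDelta p σ τ δ) :=
    lintegral_mono fun δ => ENNReal.ofReal_le_ofReal (hlb δ)
  rw [lintegral_const] at hge
  have : ENNReal.ofReal c * volume (Set.univ : Set ℝ) = ⊤ := by
    rw [Real.volume_univ, ENNReal.mul_top]
    simpa using hcpos
  rw [this] at hge
  exact top_le_iff.mp hge
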